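/- For δ > 0, x₀ > 0, s > 0 and ν = δ/2 − 1, the function y ↦ (1/(2s)) (y/x₀)^{ν/2} exp(−(x₀+y)/(2s)) I_ν(√(x₀ y)/s) is a probability density on (0,∞). -/

import Mathlib

open Real MeasureTheory

/-- The (real) modified Bessel function of the first kind. -/
noncomputable def besselI (ν : ℝ) (x : ℝ) : ℝ :=
  (x / 2) ^ ν * ∑' n : ℕ, (x ^ 2 / 4) ^ n / ((Nat.factorial n : ℝ) * Real.Gamma ((n : ℝ) + ν + 1))

/-- The transition density of the squared Bessel process of dimension `δ` started at `x₀ > 0`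
is a probability density on `(0,∞)`. -/
theorem besq_density_integral (δ ν x₀ s : ℝ) (hδ : 0 < δ) (hν : ν = δ / 2 - 1)
    (hx₀ : 0 < x₀) (hs : 0 < s) :
    ∫ y in Set.Ioi (0 : ℝ),
      (1 / (2 * s)) * (y / x₀) ^ (ν / 2) * Real.exp (-(x₀ + y) / (2 * s)) *
        besselI ν (Real.sqrt (x₀ * y) / s) = 1 := by
  have hν1 : (-1 : ℝ) < ν := by rw [hν]; linarith
  set c : ℝ := (2 * s)⁻¹ with hc_def
  have hc : 0 < c := by rw [hc_def]; positivity
  clear_value c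
  have ha : ∀ n : ℕ, (0 : ℝ) < (n : ℝ) + ν + 1 := fun n => by
    have : (0:ℝ) ≤ n := Nat.cast_nonneg n
    linarith
  set g : ℕ → ℝ → ℝ := fun n y =>
    (c ^ (ν + 1) * Real.exp (-(x₀ * c)) * (x₀ * c ^ 2) ^ n /
        (Nat.factorial n * Real.Gamma ((n : ℝ) + ν + 1))) *
      (y ^ ((n : ℝ) + ν + 1 - 1) * Real.exp (-(c * y))) with hg
  have hAnn : ∀ n : ℕ, 0 ≤ c ^ (ν + 1) * Real.exp (-(x₀ * c)) * (x₀ * c ^ 2) ^ n /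
      (Nat.factorial n * Real.Gamma ((n : ℝ) + ν + 1)) := fun n => by
    have := ha n
    positivity
  have hint : ∀ n : ℕ, ∫ y in Set.Ioi (0:ℝ), g n y
      = Real.exp (-(x₀ * c)) * ((x₀ * c) ^ n / Nat.factorial n) := by
    intro n
    rw [hg]
    rw [MeasureTheory.integral_const_mul,
      integral_rpow_mul_exp_neg_mul_Ioi (ha n) hc]
    have hG : Real.Gamma ((n : ℝ) + ν + 1) ≠ 0 := (Real.Gamma_pos_of_pos (ha n)).ne'
    have hfac : (Nat.factorial n : ℝ) ≠ 0 := Nat.cast_ne_zero.2 (Nat.factorial_ne_zero n)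
    rw [one_div, show (n : ℝ) + ν + 1 = (n : ℝ) + (ν + 1) by ring,
      Real.rpow_add (inv_pos.2 hc), Real.rpow_natCast, Real.inv_rpow hc.le]
    have hcv : c ^ (ν + 1) ≠ 0 := (Real.rpow_pos_of_pos hc _).ne'
    have hc0 : c ≠ 0 := hc.ne'
    rw [inv_pow]
    have hcn : c ^ n ≠ 0 := pow_ne_zero _ hc0
    generalize hA : c ^ (ν + 1) = A
    have hA0 : A ≠ 0 := hA ▸ hcv
    field_simp
    rw [show (n:ℝ) + (ν + 1) = (n:ℝ) + ν + 1 from (add_assoc _ _ _).symm,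
      mul_div_assoc, div_self hG]
    ring
  have hcongr : Set.EqOn
      (fun y => (1 / (2 * s)) * (y / x₀) ^ (ν / 2) * Real.exp (-(x₀ + y) / (2 * s)) *
        besselI ν (Real.sqrt (x₀ * y) / s))
      (fun y => ∑' n, g n y) (Set.Ioi 0) := by
    intro y hy
    have hy : 0 < y := hy
    have hxy : (0:ℝ) ≤ x₀ * y := by positivity
    simp only [besselI]
    have h1 : Real.sqrt (x₀ * y) / s / 2 = Real.sqrt (x₀ * y) * c := by
      rw [hc_def, div_div, div_eq_mul_inv, mul_comm s 2]
    have h2 : (Real.sqrt (x₀ * y) / s) ^ 2 / 4 = x₀ * c ^ 2 * y := by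
      rw [div_pow, Real.sq_sqrt hxy, hc_def]
      field_simp; ring
    rw [h1, h2]
    have h3 : (Real.sqrt (x₀ * y) * c) ^ ν = (x₀ * y) ^ (ν / 2) * c ^ ν := by
      rw [Real.mul_rpow (Real.sqrt_nonneg _) hc.le, Real.sqrt_eq_rpow,
        ← Real.rpow_mul hxy, show (1:ℝ) / 2 * ν = ν / 2 by ring]
    rw [h3]
    have h4 : (y / x₀) ^ (ν / 2) * (x₀ * y) ^ (ν / 2) = y ^ ν := by
      rw [← Real.mul_rpow (by positivity) hxy,
        show y / x₀ * (x₀ * y) = y ^ (2:ℕ) by field_simp,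
        ← Real.rpow_natCast y 2, ← Real.rpow_mul hy.le,
        show ((2:ℕ):ℝ) * (ν / 2) = ν by push_cast; ring]
    have h5 : Real.exp (-(x₀ + y) / (2 * s)) = Real.exp (-(x₀ * c)) * Real.exp (-(c * y)) := by
      rw [← Real.exp_add, hc_def]
      congr 1
      field_simp
      ring
    have h6 : ∑' n, g n y =
        (c ^ (ν + 1) * Real.exp (-(x₀ * c)) * y ^ ν * Real.exp (-(c * y))) *
          ∑' n : ℕ, (x₀ * c ^ 2 * y) ^ n / (Nat.factorial n * Real.Gamma ((n : ℝ) + ν + 1)) := by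
      rw [← tsum_mul_left]
      refine tsum_congr fun n => ?_
      simp only [hg]
      have hyp : y ^ ((n : ℝ) + ν + 1 - 1) = y ^ (n : ℕ) * y ^ ν := by
        rw [show (n : ℝ) + ν + 1 - 1 = (n : ℝ) + ν by ring, Real.rpow_add hy,
          Real.rpow_natCast]
      rw [hyp, mul_pow]
      ring
    show _ = ∑' n, g n y
    rw [h6, show (1:ℝ) / (2 * s) = c by rw [hc_def, one_div], h5,
      show c ^ (ν + 1) = c * c ^ ν by rw [Real.rpow_add hc, Real.rpow_one]; ring, ← h4]
    ring
  rw [MeasureTheory.setIntegral_congr_fun measurableSet_Ioi hcongr]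
  have hmeas : ∀ n : ℕ, AEStronglyMeasurable (g n) (volume.restrict (Set.Ioi 0)) := by
    intro n
    apply Measurable.aestronglyMeasurable
    exact ((measurable_id'.pow_const _).mul
      (measurable_id'.const_mul c).neg.exp).const_mul _
  have hintegrable : ∀ n : ℕ, IntegrableOn (g n) (Set.Ioi 0) := by
    intro n
    apply Integrable.const_mul
    have := integrableOn_rpow_mul_exp_neg_mul_rpow
      (show (-1:ℝ) < (n : ℝ) + ν + 1 - 1 by have := ha n; linarith) one_pos hc
    refine this.congr_fun (fun x hx => ?_) measurableSet_Ioi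
    dsimp only; rw [Real.rpow_one, neg_mul]
  have hnn : ∀ n : ℕ, ∀ᵐ y ∂(volume.restrict (Set.Ioi (0:ℝ))), 0 ≤ g n y := by
    intro n
    filter_upwards [ae_restrict_mem measurableSet_Ioi] with y hy
    have hy : (0:ℝ) < y := hy
    exact mul_nonneg (hAnn n)
      (mul_nonneg (Real.rpow_nonneg hy.le _) (Real.exp_pos _).le)
  have hval : ∀ n : ℕ, ∫⁻ y in Set.Ioi (0:ℝ), ‖g n y‖ₑ
      = ENNReal.ofReal (Real.exp (-(x₀ * c)) * ((x₀ * c) ^ n / Nat.factorial n)) := by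
    intro n
    rw [← MeasureTheory.ofReal_integral_norm_eq_lintegral_enorm (hintegrable n), ← hint n]
    congr 1
    refine MeasureTheory.integral_congr_ae ?_
    filter_upwards [hnn n] with y hy using abs_of_nonneg hy
  have hsummable : Summable fun n : ℕ => Real.exp (-(x₀ * c)) * ((x₀ * c) ^ n / Nat.factorial n) :=
    (Real.summable_pow_div_factorial (x₀ * c)).mul_left _
  rw [MeasureTheory.integral_tsum hmeas ?_]
  · simp_rw [hint]
    rw [tsum_mul_left]
    have : ∑' n : ℕ, (x₀ * c) ^ n / (Nat.factorial n : ℝ) = Real.exp (x₀ * c) := by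
      rw [Real.exp_eq_exp_ℝ, NormedSpace.exp_eq_tsum_div]
    rw [this, ← Real.exp_add]
    simp
  · simp_rw [hval]
    rw [← ENNReal.ofReal_tsum_of_nonneg (fun n => by positivity) hsummable]
    exact ENNReal.ofReal_ne_top
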